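/- Let a, b, c, e ∈ ℂ. For n ∈ ℕ define S(n) := [Γ(a+c−e+1+n) Γ(b+c−e+1+n) / (Γ(c−e+1+n) Γ(a+b+c−e+1+n))] · ∑_{k=0}^∞ (a)_k (b)_k (c+n)_k / ((e)_k (a+b+c−e+1+n)_k · k!). Assume that e, c, a+c−e+1, b+c−e+1, a+b+c−e+1 are not nonpositive integers. Then for every n ∈ ℕ the defining series converges absolutely and S(n+1) − S(n) = Γ(e) Γ(a+c−e+1+n) Γ(b+c−e+1+n) / (Γ(a) Γ(b) Γ(c+1+n) Γ(c−e+2+n)). -/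

import Mathlib

open Complex Filter Finset Topology
set_option maxHeartbeats 1600000

/-- Pochhammer symbol `(a)_k = a (a+1) ⋯ (a+k-1)`. -/
noncomputable def poch (a : ℂ) (k : ℕ) : ℂ := ∏ i ∈ Finset.range k, (a + i)

/-- The normalized sum `S(n)` for the nonterminating Saalschützian series. -/
noncomputable def Ssaal (a b c e : ℂ) (n : ℕ) : ℂ :=
  Complex.Gamma (a + c - e + 1 + n) * Complex.Gamma (b + c - e + 1 + n) /
      (Complex.Gamma (c - e + 1 + n) * Complex.Gamma (a + b + c - e + 1 + n)) *
    ∑' k : ℕ, poch a k * poch b k * poch (c + n) k /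
      (poch e k * poch (a + b + c - e + 1 + n) k * (Nat.factorial k : ℂ))

lemma poch_zero (a : ℂ) : poch a 0 = 1 := Finset.prod_range_zero _
lemma poch_succ (a : ℂ) (k : ℕ) : poch a (k+1) = poch a k * (a + k) := Finset.prod_range_succ _ _
lemma ne_neg_nat_add {x : ℂ} (hx : ∀ m : ℕ, x ≠ -(m:ℂ)) (j : ℕ) : x + j ≠ 0 := by
  intro h; exact hx j (by linear_combination h)
lemma shift_ne {x : ℂ} (hx : ∀ m : ℕ, x ≠ -(m:ℂ)) (n : ℕ) : ∀ m : ℕ, x + n ≠ -(m:ℂ) := by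
  intro m h; exact hx (n + m) (by push_cast; linear_combination h)
lemma poch_ne_zero {a : ℂ} (h : ∀ m : ℕ, a ≠ -(m:ℂ)) (k : ℕ) : poch a k ≠ 0 :=
  Finset.prod_ne_zero_iff.mpr fun i _ => ne_neg_nat_add h i
lemma poch_shift (a : ℂ) (k : ℕ) : poch (a+1) k * a = poch a k * (a + k) := by
  induction k with
  | zero => simp [poch_zero]
  | succ k ih => rw [poch_succ, poch_succ]; push_cast; linear_combination (a + 1 + k) * ih
lemma poch_eq_zero {m k : ℕ} (hk : m < k) : poch (-(m:ℂ)) k = 0 :=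
  Finset.prod_eq_zero (Finset.mem_range.mpr hk) (by simp)

noncomputable def term (a b c e : ℂ) (n : ℕ) (k : ℕ) : ℂ :=
  poch a k * poch b k * poch (c + n) k /
    (poch e k * poch (a + b + c - e + 1 + n) k * (Nat.factorial k : ℂ))

lemma Ssaal_eq (a b c e : ℂ) (m : ℕ) : Ssaal a b c e m
    = Complex.Gamma (a + c - e + 1 + m) * Complex.Gamma (b + c - e + 1 + m) /
      (Complex.Gamma (c - e + 1 + m) * Complex.Gamma (a + b + c - e + 1 + m)) *
    ∑' k : ℕ, term a b c e m k := rfl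

lemma gammaSeq_eq (z : ℂ) (k : ℕ) :
    Complex.GammaSeq z k = (k:ℂ)^z * (Nat.factorial k : ℂ) / (poch z k * (z + k)) := by
  rw [Complex.GammaSeq, ← poch_succ]; rfl

lemma gammaSeq_ne_zero {z : ℂ} (hz : ∀ m : ℕ, z ≠ -(m:ℂ)) {k : ℕ} (hk : k ≠ 0) :
    Complex.GammaSeq z k ≠ 0 := by
  rw [gammaSeq_eq]
  apply div_ne_zero
  · refine mul_ne_zero (fun h => ?_) (Nat.cast_ne_zero.mpr (Nat.factorial_ne_zero k))
    rw [Complex.cpow_eq_zero_iff] at h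
    exact hk (Nat.cast_eq_zero.mp h.1)
  · exact mul_ne_zero (poch_ne_zero hz k) (ne_neg_nat_add hz k)

lemma term_step_k (a b c e : ℂ) (he : ∀ m : ℕ, e ≠ -(m:ℂ))
    (h3 : ∀ m : ℕ, a + b + c - e + 1 ≠ -(m:ℂ)) (n k : ℕ) :
    term a b c e n (k+1)
      = term a b c e n k * ((a+k)*(b+k)*(c+n+k)) / ((e+k)*((a+b+c-e+1+n)+k)*((k:ℂ)+1)) := by
  have hf : ∀ m : ℕ, a + b + c - e + 1 + (n:ℂ) ≠ -(m:ℂ) := shift_ne h3 n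
  have hpe := poch_ne_zero he k
  have hpf := poch_ne_zero hf k
  have hek := ne_neg_nat_add he k
  have hfk := ne_neg_nat_add hf k
  have hkf : ((Nat.factorial k : ℂ)) ≠ 0 := Nat.cast_ne_zero.mpr (Nat.factorial_ne_zero k)
  have hk1 : ((k:ℂ)+1) ≠ 0 := by
    have := Nat.cast_add_one_ne_zero (R := ℂ) k; simpa using this
  simp only [term, poch_succ, Nat.factorial_succ, Nat.cast_mul]
  field_simp
  push_cast
  ring

lemma term_step_n (a b c e : ℂ) (hc : ∀ m : ℕ, c ≠ -(m:ℂ))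
    (h3 : ∀ m : ℕ, a + b + c - e + 1 ≠ -(m:ℂ)) (n k : ℕ) :
    term a b c e (n+1) k
      = term a b c e n k * ((c+n+k) * (a+b+c-e+1+n)) / (((a+b+c-e+1+n)+k) * (c+n)) := by
  have harg1 : (c + ((n+1 : ℕ) : ℂ)) = (c + n) + 1 := by push_cast; ring
  have harg2 : (a + b + c - e + 1 + ((n+1 : ℕ) : ℂ)) = (a + b + c - e + 1 + n) + 1 := by
    push_cast; ring
  have hf : ∀ m : ℕ, a + b + c - e + 1 + (n:ℂ) ≠ -(m:ℂ) := shift_ne h3 n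
  have hcn : (c + (n:ℂ)) ≠ 0 := ne_neg_nat_add hc n
  have hfn : (a + b + c - e + 1 + (n:ℂ)) ≠ 0 := ne_neg_nat_add h3 n
  have hpf := poch_ne_zero hf k
  have hfk := ne_neg_nat_add hf k
  have e1 : poch (c + n + 1) k = poch (c + n) k * (c + n + k) / (c + n) := by
    rw [eq_div_iff hcn]; linear_combination poch_shift (c + n) k
  have e2 : poch (a + b + c - e + 1 + n + 1) k
      = poch (a + b + c - e + 1 + n) k * (a + b + c - e + 1 + n + k) / (a + b + c - e + 1 + n) := by
    rw [eq_div_iff hfn]; linear_combination poch_shift (a + b + c - e + 1 + n) k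
  simp only [term, harg1, harg2, e1, e2]
  field_simp

lemma tele (a b c e : ℂ) (he : ∀ m : ℕ, e ≠ -(m:ℂ)) (hc : ∀ m : ℕ, c ≠ -(m:ℂ))
    (h3 : ∀ m : ℕ, a + b + c - e + 1 ≠ -(m:ℂ)) (n k : ℕ) :
    (c + n) * ((a+c-e+1+n)*(b+c-e+1+n) * term a b c e (n+1) k
        - (c-e+1+n)*(a+b+c-e+1+n) * term a b c e n k)
      = (a+b+c-e+1+n) * (((k:ℂ)+1)*((k:ℂ)+e) * term a b c e n (k+1)
        - (k:ℂ)*((k:ℂ)+e-1) * term a b c e n k) := by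
  have hf : ∀ m : ℕ, a + b + c - e + 1 + (n:ℂ) ≠ -(m:ℂ) := shift_ne h3 n
  have hcn : (c + (n:ℂ)) ≠ 0 := ne_neg_nat_add hc n
  have hfn : (a + b + c - e + 1 + (n:ℂ)) ≠ 0 := ne_neg_nat_add h3 n
  have hek := ne_neg_nat_add he k
  have hfk := ne_neg_nat_add hf k
  have hk1 : ((k:ℂ)+1) ≠ 0 := by
    have := Nat.cast_add_one_ne_zero (R := ℂ) k; simpa using this
  rw [term_step_k a b c e he h3 n k, term_step_n a b c e hc h3 n k]
  field_simp
  ring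

lemma term_repr (a b c e : ℂ) (ha : ∀ m : ℕ, a ≠ -(m:ℂ)) (hb : ∀ m : ℕ, b ≠ -(m:ℂ))
    (hc : ∀ m : ℕ, c ≠ -(m:ℂ)) (he : ∀ m : ℕ, e ≠ -(m:ℂ))
    (h3 : ∀ m : ℕ, a + b + c - e + 1 ≠ -(m:ℂ)) (n : ℕ) {k : ℕ} (hk : k ≠ 0) :
    (k:ℂ) * ((k:ℂ) + e - 1) * term a b c e n k
      = (((k:ℂ)+e-1)*(e+k)*((a+b+c-e+1+n)+k) / ((a+k)*(b+k)*((c+n)+k)))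
        * (Complex.GammaSeq e k * Complex.GammaSeq (a+b+c-e+1+n) k /
           (Complex.GammaSeq a k * Complex.GammaSeq b k * Complex.GammaSeq (c+n) k)) := by
  have hcc : ∀ m : ℕ, c + (n:ℂ) ≠ -(m:ℂ) := shift_ne hc n
  have hff : ∀ m : ℕ, a + b + c - e + 1 + (n:ℂ) ≠ -(m:ℂ) := shift_ne h3 n
  have hk0 : (k:ℂ) ≠ 0 := Nat.cast_ne_zero.mpr hk
  have hpow : (k:ℂ)^a * (k:ℂ)^b * (k:ℂ)^(c+(n:ℂ)) * (k:ℂ)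
      = (k:ℂ)^e * (k:ℂ)^(a+b+c-e+1+(n:ℂ)) := by
    have h1 : ∀ u v : ℂ, (k:ℂ)^u * (k:ℂ)^v = (k:ℂ)^(u+v) := fun u v =>
      (Complex.cpow_add _ _ hk0).symm
    rw [h1 a b, h1 (a+b) (c+(n:ℂ)), h1 e (a+b+c-e+1+(n:ℂ)),
      show e+(a+b+c-e+1+(n:ℂ)) = (a+b+(c+(n:ℂ)))+1 by ring]
    conv_rhs => rw [Complex.cpow_add _ _ hk0, Complex.cpow_one]
  have hGa := gammaSeq_ne_zero ha hk
  have hGb := gammaSeq_ne_zero hb hk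
  have hGc := gammaSeq_ne_zero hcc hk
  have hGe := gammaSeq_ne_zero he hk
  have hGf := gammaSeq_ne_zero hff hk
  have hpa := poch_ne_zero ha k
  have hpb := poch_ne_zero hb k
  have hpc := poch_ne_zero hcc k
  have hpe := poch_ne_zero he k
  have hpf := poch_ne_zero hff k
  have hak := ne_neg_nat_add ha k
  have hbk := ne_neg_nat_add hb k
  have hck := ne_neg_nat_add hcc k
  have hek := ne_neg_nat_add he k
  have hfk := ne_neg_nat_add hff k
  have hkf : ((Nat.factorial k : ℂ)) ≠ 0 := Nat.cast_ne_zero.mpr (Nat.factorial_ne_zero k)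
  have hcp : ∀ u : ℂ, (k:ℂ)^u ≠ 0 := fun u h => by
    rw [Complex.cpow_eq_zero_iff] at h; exact hk0 h.1
  simp only [term, gammaSeq_eq]
  field_simp [hcp a, hcp b, hcp (c+(n:ℂ)), hcp e, hcp (a+b+c-e+1+(n:ℂ))]
  linear_combination ((k:ℂ)+e-1) * hpow

lemma frac_tendsto (x y : ℂ) :
    Tendsto (fun k : ℕ => ((k:ℂ)+x)/((k:ℂ)+y)) atTop (𝓝 1) := by
  have hinv : Tendsto (fun k : ℕ => ((k:ℂ))⁻¹) atTop (𝓝 0) :=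
    tendsto_inv_atTop_nhds_zero_nat (𝕜 := ℂ)
  have hx : Tendsto (fun k : ℕ => 1 + x*((k:ℂ))⁻¹) atTop (𝓝 1) := by
    simpa using tendsto_const_nhds.add (hinv.const_mul x)
  have hy : Tendsto (fun k : ℕ => 1 + y*((k:ℂ))⁻¹) atTop (𝓝 1) := by
    simpa using tendsto_const_nhds.add (hinv.const_mul y)
  have hdiv := hx.div hy one_ne_zero
  rw [div_one] at hdiv
  apply hdiv.congr'
  filter_upwards [eventually_ne_atTop 0] with k hk
  have hk0 : (k:ℂ) ≠ 0 := Nat.cast_ne_zero.mpr hk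
  rw [show (k:ℂ) + x = (k:ℂ)*(1 + x*((k:ℂ))⁻¹) by field_simp,
    show (k:ℂ) + y = (k:ℂ)*(1 + y*((k:ℂ))⁻¹) by field_simp,
    mul_div_mul_left _ _ hk0]
  rfl

lemma term_tendsto_main (a b c e : ℂ) (ha : ∀ m : ℕ, a ≠ -(m:ℂ)) (hb : ∀ m : ℕ, b ≠ -(m:ℂ))
    (hc : ∀ m : ℕ, c ≠ -(m:ℂ)) (he : ∀ m : ℕ, e ≠ -(m:ℂ))
    (h3 : ∀ m : ℕ, a + b + c - e + 1 ≠ -(m:ℂ)) (n : ℕ) :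
    Tendsto (fun k : ℕ => (k:ℂ) * ((k:ℂ) + e - 1) * term a b c e n k) atTop
      (𝓝 (Complex.Gamma e * Complex.Gamma (a+b+c-e+1+n) /
        (Complex.Gamma a * Complex.Gamma b * Complex.Gamma (c+n)))) := by
  have hcc : ∀ m : ℕ, c + (n:ℂ) ≠ -(m:ℂ) := shift_ne hc n
  have hff : ∀ m : ℕ, a + b + c - e + 1 + (n:ℂ) ≠ -(m:ℂ) := shift_ne h3 n
  have hGne : Complex.Gamma a * Complex.Gamma b * Complex.Gamma (c+n) ≠ 0 :=
    mul_ne_zero (mul_ne_zero (Complex.Gamma_ne_zero ha) (Complex.Gamma_ne_zero hb))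
      (Complex.Gamma_ne_zero hcc)
  have hGs : Tendsto (fun k : ℕ => Complex.GammaSeq e k * Complex.GammaSeq (a+b+c-e+1+n) k /
      (Complex.GammaSeq a k * Complex.GammaSeq b k * Complex.GammaSeq (c+n) k)) atTop
      (𝓝 (Complex.Gamma e * Complex.Gamma (a+b+c-e+1+n) /
        (Complex.Gamma a * Complex.Gamma b * Complex.Gamma (c+n)))) :=
    ((Complex.GammaSeq_tendsto_Gamma e).mul
      (Complex.GammaSeq_tendsto_Gamma (a+b+c-e+1+n))).div
      (((Complex.GammaSeq_tendsto_Gamma a).mul (Complex.GammaSeq_tendsto_Gamma b)).mul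
        (Complex.GammaSeq_tendsto_Gamma (c+n))) hGne
  have hF : Tendsto (fun k : ℕ => (((k:ℂ)+(e-1))/((k:ℂ)+a)) * (((k:ℂ)+e)/((k:ℂ)+b)) *
      (((k:ℂ)+(a+b+c-e+1+n))/((k:ℂ)+(c+n)))) atTop (𝓝 1) := by
    have := ((frac_tendsto (e-1) a).mul (frac_tendsto e b)).mul
      (frac_tendsto (a+b+c-e+1+n) (c+n))
    simpa using this
  have hmul := hF.mul hGs
  rw [one_mul] at hmul
  apply hmul.congr'
  filter_upwards [eventually_ne_atTop 0] with k hk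
  rw [term_repr a b c e ha hb hc he h3 n hk]
  congr 1
  rw [div_mul_div_comm, div_mul_div_comm]
  congr 1 <;> ring

lemma term_zero_a {a b c e : ℂ} {n m k : ℕ} (hma : a = -(m:ℂ)) (hk : m < k) :
    term a b c e n k = 0 := by
  have : poch a k = 0 := by rw [hma]; exact poch_eq_zero hk
  simp [term, this]

lemma term_zero_b {a b c e : ℂ} {n m k : ℕ} (hmb : b = -(m:ℂ)) (hk : m < k) :
    term a b c e n k = 0 := by
  have : poch b k = 0 := by rw [hmb]; exact poch_eq_zero hk
  simp [term, this]

lemma term_tendsto_all (a b c e : ℂ) (hc : ∀ m : ℕ, c ≠ -(m:ℂ)) (he : ∀ m : ℕ, e ≠ -(m:ℂ))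
    (h3 : ∀ m : ℕ, a + b + c - e + 1 ≠ -(m:ℂ)) (n : ℕ) :
    Tendsto (fun k : ℕ => (k:ℂ) * ((k:ℂ) + e - 1) * term a b c e n k) atTop
      (𝓝 (Complex.Gamma e * Complex.Gamma (a+b+c-e+1+n) /
        (Complex.Gamma a * Complex.Gamma b * Complex.Gamma (c+n)))) := by
  by_cases ha : ∀ m : ℕ, a ≠ -(m:ℂ)
  · by_cases hb : ∀ m : ℕ, b ≠ -(m:ℂ)
    · exact term_tendsto_main a b c e ha hb hc he h3 n
    · push_neg at hb
      obtain ⟨m, hm⟩ := hb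
      have hΓ : Complex.Gamma b = 0 := by rw [hm]; exact Complex.Gamma_neg_nat_eq_zero m
      have hz : Complex.Gamma e * Complex.Gamma (a+b+c-e+1+n) /
          (Complex.Gamma a * Complex.Gamma b * Complex.Gamma (c+n)) = 0 := by
        rw [hΓ]; simp
      rw [hz]
      apply Tendsto.congr' _ tendsto_const_nhds
      filter_upwards [eventually_gt_atTop m] with k hk
      rw [term_zero_b hm hk, mul_zero]
  · push_neg at ha
    obtain ⟨m, hm⟩ := ha
    have hΓ : Complex.Gamma a = 0 := by rw [hm]; exact Complex.Gamma_neg_nat_eq_zero m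
    have hz : Complex.Gamma e * Complex.Gamma (a+b+c-e+1+n) /
        (Complex.Gamma a * Complex.Gamma b * Complex.Gamma (c+n)) = 0 := by
      rw [hΓ]; simp
    rw [hz]
    apply Tendsto.congr' _ tendsto_const_nhds
    filter_upwards [eventually_gt_atTop m] with k hk
    rw [term_zero_a hm hk, mul_zero]

lemma summable_norm_term (a b c e : ℂ) (hc : ∀ m : ℕ, c ≠ -(m:ℂ)) (he : ∀ m : ℕ, e ≠ -(m:ℂ))
    (h3 : ∀ m : ℕ, a + b + c - e + 1 ≠ -(m:ℂ)) (n : ℕ) :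
    Summable (fun k : ℕ => ‖term a b c e n k‖) := by
  have hT := term_tendsto_all a b c e hc he h3 n
  set L := Complex.Gamma e * Complex.Gamma (a+b+c-e+1+n) /
    (Complex.Gamma a * Complex.Gamma b * Complex.Gamma (c+n)) with hL
  have hC : ∀ᶠ k : ℕ in atTop, ‖(k:ℂ) * ((k:ℂ) + e - 1) * term a b c e n k‖ ≤ ‖L‖ + 1 := by
    have := hT.norm
    exact this.eventually (ge_mem_nhds (lt_add_one ‖L‖))
  apply Summable.of_norm_bounded_eventually (g := fun k : ℕ => ((‖L‖+1)*2) * (1/(k:ℝ)^2))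
  · exact ((Real.summable_one_div_nat_pow.mpr one_lt_two).mul_left _)
  · rw [Nat.cofinite_eq_atTop]
    filter_upwards [hC, eventually_ge_atTop (max 1 ⌈2*‖e-1‖⌉₊)] with k h1 h2
    have hk1 : (1:ℝ) ≤ (k:ℝ) := by
      have := le_trans (le_max_left 1 _) h2
      exact_mod_cast this
    have hke : 2*‖e-1‖ ≤ (k:ℝ) := by
      have h4 := le_trans (le_max_right 1 _) h2
      calc 2*‖e-1‖ ≤ (⌈2*‖e-1‖⌉₊ : ℝ) := Nat.le_ceil _
      _ ≤ (k:ℝ) := by exact_mod_cast h4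
    have hlow : (k:ℝ)^2/2 ≤ ‖(k:ℂ)*((k:ℂ)+e-1)‖ := by
      rw [norm_mul, Complex.norm_natCast]
      have h5 : (k:ℝ) - ‖e-1‖ ≤ ‖(k:ℂ)+e-1‖ := by
        have h6 := norm_sub_norm_le ((k:ℂ)) (-(e-1))
        simp only [norm_neg, sub_neg_eq_add] at h6
        calc (k:ℝ) - ‖e-1‖ = ‖(k:ℂ)‖ - ‖e-1‖ := by rw [Complex.norm_natCast]
        _ ≤ ‖(k:ℂ)+(e-1)‖ := h6
        _ = ‖(k:ℂ)+e-1‖ := by rw [add_sub_assoc]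
      nlinarith [norm_nonneg ((k:ℂ)+e-1)]
    have h7 : ‖(k:ℂ)*((k:ℂ)+e-1)‖ * ‖term a b c e n k‖ ≤ ‖L‖+1 := by
      rw [← norm_mul]; exact h1
    rw [norm_norm]
    have h8 : (0:ℝ) < (k:ℝ)^2 := by nlinarith
    have h9 : (0:ℝ) ≤ ‖term a b c e n k‖ := norm_nonneg _
    have h10 : (k:ℝ)^2/2 * ‖term a b c e n k‖ ≤ ‖L‖+1 :=
      le_trans (mul_le_mul_of_nonneg_right hlow h9) h7
    have h11 : ‖term a b c e n k‖ ≤ (‖L‖+1)*2/(k:ℝ)^2 := by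
      rw [le_div_iff₀ h8]; nlinarith
    rw [mul_one_div]
    exact h11

lemma pre_eq (x y γ f : ℂ) (hf0 : f ≠ 0) :
    x * y / (Complex.Gamma γ * Complex.Gamma f)
      = x * y / (Complex.Gamma (γ+1) * Complex.Gamma (f+1)) * (γ * f) := by
  have hf1 : Complex.Gamma (f+1) = f * Complex.Gamma f := Complex.Gamma_add_one f hf0
  by_cases hγ : γ = 0
  · subst hγ; rw [Complex.Gamma_zero]; simp
  · rw [Complex.Gamma_add_one γ hγ, hf1]
    rcases eq_or_ne (Complex.Gamma γ) 0 with h0|h0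
    · rw [h0]; simp
    · rcases eq_or_ne (Complex.Gamma f) 0 with h4|h4
      · rw [h4]; simp
      · field_simp

lemma final_eq (Ga Gb Gc G1 Gα Gβ Ge Gf cc f : ℂ) (hf : f ≠ 0) (hGf : Gf ≠ 0) (hcc : cc ≠ 0) :
    Gα * Gβ / (G1 * (f * Gf)) * f * (Ge * Gf / (Ga * Gb * Gc)) / cc
      = Ge * Gα * Gβ / (Ga * Gb * (cc * Gc) * G1) := by
  rcases eq_or_ne Ga 0 with h|h; · simp [h]
  rcases eq_or_ne Gb 0 with h'|h'; · simp [h']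
  rcases eq_or_ne Gc 0 with h''|h''; · simp [h'']
  rcases eq_or_ne G1 0 with h4|h4; · simp [h4]
  field_simp

theorem saalschutz_S_difference (a b c e : ℂ)
    (he : ∀ m : ℕ, e ≠ -(m : ℂ)) (hc : ∀ m : ℕ, c ≠ -(m : ℂ))
    (h1 : ∀ m : ℕ, a + c - e + 1 ≠ -(m : ℂ))
    (h2 : ∀ m : ℕ, b + c - e + 1 ≠ -(m : ℂ))
    (h3 : ∀ m : ℕ, a + b + c - e + 1 ≠ -(m : ℂ)) :
    ∀ n : ℕ,
      (Summable fun k : ℕ =>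
        ‖poch a k * poch b k * poch (c + n) k /
          (poch e k * poch (a + b + c - e + 1 + n) k * (Nat.factorial k : ℂ))‖) ∧
      Ssaal a b c e (n + 1) - Ssaal a b c e n =
        Complex.Gamma e * Complex.Gamma (a + c - e + 1 + n) *
            Complex.Gamma (b + c - e + 1 + n) /
          (Complex.Gamma a * Complex.Gamma b * Complex.Gamma (c + 1 + n) *
            Complex.Gamma (c - e + 2 + n)) := by
  intro n
  have hc0 : (c + (n:ℂ)) ≠ 0 := ne_neg_nat_add hc n
  have hf0 : (a+b+c-e+1+(n:ℂ)) ≠ 0 := ne_neg_nat_add h3 n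
  have hα0 : (a+c-e+1+(n:ℂ)) ≠ 0 := ne_neg_nat_add h1 n
  have hβ0 : (b+c-e+1+(n:ℂ)) ≠ 0 := ne_neg_nat_add h2 n
  have hΓf : Complex.Gamma (a+b+c-e+1+(n:ℂ)) ≠ 0 := Complex.Gamma_ne_zero (shift_ne h3 n)
  have hsum0 := summable_norm_term a b c e hc he h3 n
  have hsum1 := summable_norm_term a b c e hc he h3 (n+1)
  have hterm0 : Summable (term a b c e n) := hsum0.of_norm
  have hterm1 : Summable (term a b c e (n+1)) := hsum1.of_norm
  refine ⟨hsum0, ?_⟩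
  have hS1 : Ssaal a b c e (n+1)
      = (Complex.Gamma (a+c-e+1+(n:ℂ)) * Complex.Gamma (b+c-e+1+(n:ℂ)) /
         (Complex.Gamma (c-e+1+(n:ℂ)+1) * Complex.Gamma (a+b+c-e+1+(n:ℂ)+1)))
        * ((a+c-e+1+(n:ℂ))*(b+c-e+1+(n:ℂ))) * ∑' k : ℕ, term a b c e (n+1) k := by
    rw [Ssaal_eq a b c e (n+1),
      show (a+c-e+1+((n+1:ℕ):ℂ)) = a+c-e+1+(n:ℂ)+1 by push_cast; ring,
      show (b+c-e+1+((n+1:ℕ):ℂ)) = b+c-e+1+(n:ℂ)+1 by push_cast; ring,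
      show (c-e+1+((n+1:ℕ):ℂ)) = c-e+1+(n:ℂ)+1 by push_cast; ring,
      show (a+b+c-e+1+((n+1:ℕ):ℂ)) = a+b+c-e+1+(n:ℂ)+1 by push_cast; ring,
      Complex.Gamma_add_one (a+c-e+1+(n:ℂ)) hα0,
      Complex.Gamma_add_one (b+c-e+1+(n:ℂ)) hβ0]
    ring
  have hS0 : Ssaal a b c e n
      = (Complex.Gamma (a+c-e+1+(n:ℂ)) * Complex.Gamma (b+c-e+1+(n:ℂ)) /
         (Complex.Gamma (c-e+1+(n:ℂ)+1) * Complex.Gamma (a+b+c-e+1+(n:ℂ)+1)))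
        * ((c-e+1+(n:ℂ))*(a+b+c-e+1+(n:ℂ))) * ∑' k : ℕ, term a b c e n k := by
    rw [Ssaal_eq a b c e n,
      pre_eq (Complex.Gamma (a+c-e+1+(n:ℂ))) (Complex.Gamma (b+c-e+1+(n:ℂ)))
        (c-e+1+(n:ℂ)) (a+b+c-e+1+(n:ℂ)) hf0]
  rw [hS1, hS0, ← tsum_mul_left, ← tsum_mul_left,
    ← Summable.tsum_sub (hterm1.mul_left _) (hterm0.mul_left _)]
  set P := Complex.Gamma (a+c-e+1+(n:ℂ)) * Complex.Gamma (b+c-e+1+(n:ℂ)) /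
      (Complex.Gamma (c-e+1+(n:ℂ)+1) * Complex.Gamma (a+b+c-e+1+(n:ℂ)+1)) with hP
  set g : ℕ → ℂ := fun K => P * (a+b+c-e+1+(n:ℂ)) *
      ((K:ℂ)*((K:ℂ)+e-1)* term a b c e n K) / (c+(n:ℂ)) with hgdef
  have hD : ∀ k : ℕ,
      P * ((a+c-e+1+(n:ℂ))*(b+c-e+1+(n:ℂ))) * term a b c e (n+1) k
        - P * ((c-e+1+(n:ℂ))*(a+b+c-e+1+(n:ℂ))) * term a b c e n k
      = g (k+1) - g k := by
    intro k
    have ht := tele a b c e he hc h3 n k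
    simp only [hgdef]
    push_cast
    rw [div_sub_div_same, eq_div_iff hc0]
    linear_combination P * ht
  have hLIM : Tendsto g atTop (𝓝 (P * (a+b+c-e+1+(n:ℂ)) *
      (Complex.Gamma e * Complex.Gamma (a+b+c-e+1+(n:ℂ)) /
        (Complex.Gamma a * Complex.Gamma b * Complex.Gamma (c+(n:ℂ)))) / (c+(n:ℂ)))) := by
    rw [hgdef]
    exact ((term_tendsto_all a b c e hc he h3 n).const_mul
      (P * (a+b+c-e+1+(n:ℂ)))).div_const (c+(n:ℂ))
  have hg0 : g 0 = 0 := by simp [hgdef]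
  have hsum_g : Summable (fun k => g (k+1) - g k) :=
    ((hterm1.mul_left (P * ((a+c-e+1+(n:ℂ))*(b+c-e+1+(n:ℂ))))).sub
      (hterm0.mul_left (P * ((c-e+1+(n:ℂ))*(a+b+c-e+1+(n:ℂ)))))).congr hD
  have htsum_eq : ∑' k : ℕ,
      (P * ((a+c-e+1+(n:ℂ))*(b+c-e+1+(n:ℂ))) * term a b c e (n+1) k
        - P * ((c-e+1+(n:ℂ))*(a+b+c-e+1+(n:ℂ))) * term a b c e n k)
      = ∑' k : ℕ, (g (k+1) - g k) := tsum_congr hD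
  rw [htsum_eq]
  have htends := hsum_g.hasSum.tendsto_sum_nat
  have hps : (fun K => ∑ i ∈ Finset.range K, (g (i+1) - g i)) = fun K => g K - g 0 := by
    funext K; exact Finset.sum_range_sub g K
  rw [hps] at htends
  have htends2 : Tendsto (fun K => g K - g 0) atTop (𝓝 (P * (a+b+c-e+1+(n:ℂ)) *
      (Complex.Gamma e * Complex.Gamma (a+b+c-e+1+(n:ℂ)) /
        (Complex.Gamma a * Complex.Gamma b * Complex.Gamma (c+(n:ℂ)))) / (c+(n:ℂ)))) := by
    simpa [hg0] using hLIM.sub_const (g 0)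
  rw [tendsto_nhds_unique htends htends2]
  rw [show c+1+(n:ℂ) = (c+(n:ℂ))+1 by ring, show c-e+2+(n:ℂ) = (c-e+1+(n:ℂ))+1 by ring,
    Complex.Gamma_add_one (c+(n:ℂ)) hc0, hP,
    Complex.Gamma_add_one (a+b+c-e+1+(n:ℂ)) hf0]
  exact final_eq (Complex.Gamma a) (Complex.Gamma b) (Complex.Gamma (c+(n:ℂ)))
    (Complex.Gamma (c-e+1+(n:ℂ)+1)) (Complex.Gamma (a+c-e+1+(n:ℂ)))
    (Complex.Gamma (b+c-e+1+(n:ℂ))) (Complex.Gamma e) (Complex.Gamma (a+b+c-e+1+(n:ℂ)))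
    (c+(n:ℂ)) (a+b+c-e+1+(n:ℂ)) hf0 hΓf hc0
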